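/- Let ⟨S,R⟩ be a set of terms with restricted regular constraints, R = ⟨A,V,C,W,h⟩. If every term s ∈ S is regular with respect to R, i.e., for each variable x occurring at least twice in s either |L(A,C(x))| is finite or x ∈ W, then L(⟨S,R⟩) is a regular term language. -/

import Mathlib

namespace RITRC

/-- Terms over a signature (symbols `F` with arities `ar`) with variables in `V`. -/
inductive Term (F : Type) (ar : F → ℕ) (V : Type) : Type where
  | var : V → Term F ar V
  | app : (f : F) → (Fin (ar f) → Term F ar V) → Term F ar V

/-- Ground terms (terms without variables). -/
abbrev GTerm (F : Type) (ar : F → ℕ) : Type := Term F ar Empty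

variable {F V V' Q : Type} {ar : F → ℕ}

/-- Applying a substitution to a term. -/
def Term.subst (φ : V → Term F ar V') : Term F ar V → Term F ar V'
  | .var x => φ x
  | .app f ts => .app f (fun i => (ts i).subst φ)

/-- The height of a term. -/
def Term.height : Term F ar V → ℕ
  | .var _ => 0
  | .app _ ts => Finset.univ.sup (fun i => (ts i).height + 1)

/-- The size of a term. -/
def Term.size : Term F ar V → ℕ
  | .var _ => 1
  | .app _ ts => 1 + ∑ i, (ts i).size

/-- The subterm of a term at a position (a list of child indices), if it exists. -/
def Term.sub : Term F ar V → List ℕ → Option (Term F ar V)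
  | t, [] => some t
  | .var _, _ :: _ => none
  | .app f ts, i :: p => if h : i < ar f then (ts ⟨i, h⟩).sub p else none

/-- The root symbol of a term: a function symbol or a variable. -/
def Term.rootSym : Term F ar V → F ⊕ V
  | .var x => .inr x
  | .app f _ => .inl f

/-- `p` is a position of `t`. -/
def Term.isPos (t : Term F ar V) (p : List ℕ) : Prop := t.sub p ≠ none

/-- `p` is a variable position of `t`. -/
def Term.isVarPos (t : Term F ar V) (p : List ℕ) : Prop :=
  ∃ x, t.sub p = some (Term.var x)

/-- `p` is a non-variable position of `t`. -/
def Term.isNonVarPos (t : Term F ar V) (p : List ℕ) : Prop :=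
  ∃ f ts, t.sub p = some (Term.app f ts)

/-- The variable `x` occurs in `t`. -/
def Term.varOccurs (t : Term F ar V) (x : V) : Prop :=
  ∃ p, t.sub p = some (Term.var x)

/-- The variable `x` occurs at least twice in `t`. -/
def Term.occursTwice (t : Term F ar V) (x : V) : Prop :=
  ∃ p q, p ≠ q ∧ t.sub p = some (Term.var x) ∧ t.sub q = some (Term.var x)

/-- `t` is determined at position `p`: either `p` is a non-variable position
of `t`, or some prefix of `p` is labeled by a constant symbol. -/
def Term.determinedAt (t : Term F ar V) (p : List ℕ) : Prop :=
  t.isNonVarPos p ∨ ∃ p', p' <+: p ∧ ∃ f ts, t.sub p' = some (Term.app f ts) ∧ ar f = 0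

/-- A deterministic tree automaton: at most one transition `f(q₁,…,qₖ) → q`
for every `f` and states `q₁,…,qₖ`. -/
structure DTA (F : Type) (ar : F → ℕ) (Q : Type) : Type where
  δ : (f : F) → (Fin (ar f) → Q) → Option Q

/-- Collect a family of optional values into an optional family. -/
def allSome {n : ℕ} {α : Type} (g : Fin n → Option α) : Option (Fin n → α) :=
  if h : ∀ i, (g i).isSome then some (fun i => (g i).get (h i)) else none

/-- The state reached by `A` on a term, where variables are pre-assigned states by `C`. -/
def DTA.runC (A : DTA F ar Q) (C : V → Q) : Term F ar V → Option Q
  | .var x => some (C x)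
  | .app f ts => (allSome (fun i => A.runC C (ts i))).bind (A.δ f)

/-- The state reached by `A` on a ground term. -/
def DTA.run (A : DTA F ar Q) : GTerm F ar → Option Q :=
  A.runC (fun x => x.elim)

/-- `L(A,q)`: the set of ground terms on which `A` reaches state `q`. -/
def DTA.lang (A : DTA F ar Q) (q : Q) : Set (GTerm F ar) :=
  {t | A.run t = some q}

/-- `A` is complete. -/
def DTA.Complete (A : DTA F ar Q) : Prop :=
  ∀ (f : F) (qs : Fin (ar f) → Q), (A.δ f qs).isSome

/-- `A` is a 1-or-n DTA: each state has exactly one, or at least `n`, terms. -/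
def DTA.OneOr (A : DTA F ar Q) (n : ℕ) : Prop :=
  ∀ q : Q, (A.lang q).encard = 1 ∨ (n : ℕ∞) ≤ (A.lang q).encard

/-- The number of transitions of a DTA. -/
noncomputable def DTA.numTrans [Fintype F] [Fintype Q] (A : DTA F ar Q) : ℕ :=
  ∑ f : F, ∑ qs : Fin (ar f) → Q, if (A.δ f qs).isSome then 1 else 0

/-- A set of ground terms is regular if it is recognized by some (finite) DTA. -/
def IsRegular (L : Set (GTerm F ar)) : Prop :=
  ∃ (Q : Type) (_ : Fintype Q) (A : DTA F ar Q) (Facc : Set Q),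
    L = {t | ∃ q ∈ Facc, A.run t = some q}

/-- A DTA bundled with its (finite) state type and accepting states. -/
structure NDTA (F : Type) (ar : F → ℕ) : Type 1 where
  Q : Type
  fin : Fintype Q
  A : DTA F ar Q
  acc : Set Q

/-- The language recognized by a bundled DTA. -/
def NDTA.lang (N : NDTA F ar) : Set (GTerm F ar) :=
  {t | ∃ q ∈ N.acc, N.A.run t = some q}

/-- The size of a bundled DTA: number of states plus sum of sizes of transitions. -/
noncomputable def NDTA.size [Fintype F] (N : NDTA F ar) : ℕ :=
  letI := N.fin
  Fintype.card N.Q +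
    ∑ f : F, ∑ qs : Fin (ar f) → N.Q, if (N.A.δ f qs).isSome then ar f + 2 else 0

/-- `L(⟨S,M⟩)`: the language of a set of terms `S` with regular constraints `M`. -/
def langM (S : Set (Term F ar V)) (M : V → NDTA F ar) : Set (GTerm F ar) :=
  {t | ∃ s ∈ S, ∃ φ : V → GTerm F ar, (∀ x, φ x ∈ (M x).lang) ∧ t = s.subst φ}

/-- `L(⟨S,R⟩)` for a single regular constraint `R = ⟨A,C⟩`. -/
def langSingle (S : Set (Term F ar V)) (A : DTA F ar Q) (C : V → Q) :
    Set (GTerm F ar) :=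
  {t | ∃ s ∈ S, ∃ φ : V → GTerm F ar, (∀ x, A.run (φ x) = some (C x)) ∧ t = s.subst φ}

/-- A restricted regular constraint `R = ⟨A,V,C,W,h⟩`. -/
structure RRC (F : Type) (ar : F → ℕ) (V Q : Type) : Type where
  A : DTA F ar Q
  C : V → Q
  W : Set V
  hgt : ℕ

/-- A solution of a restricted regular constraint. -/
def RRC.IsSolution (R : RRC F ar V Q) (φ : V → GTerm F ar) : Prop :=
  (∀ x, R.A.run (φ x) = some (R.C x)) ∧ ∀ x ∈ R.W, (φ x).height ≤ R.hgt

/-- `L(⟨S,R⟩)` for a restricted regular constraint `R`. -/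
def RRC.lang (R : RRC F ar V Q) (S : Set (Term F ar V)) : Set (GTerm F ar) :=
  {t | ∃ s ∈ S, ∃ φ, R.IsSolution φ ∧ t = s.subst φ}

/-- Renaming the variables of a term. -/
def Term.rename (ρ : V → V') (t : Term F ar V) : Term F ar V' :=
  t.subst (fun x => Term.var (ρ x))

/-- `s` and `t` are structurally similar: `t` is obtained from `s` by an
injective variable renaming. -/
def StructSim (s : Term F ar V) (t : Term F ar V') : Prop :=
  ∃ ρ : V → V', Function.Injective ρ ∧ t = s.rename ρ

/-- `s` and `t` are structurally equal with respect to the state assignment `C`. -/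
def StructEq (C : V → Q) (s t : Term F ar V) : Prop :=
  StructSim s t ∧
    ∀ p x y, s.sub p = some (Term.var x) → t.sub p = some (Term.var y) → C x = C y

/-- `s` is structurally subsumed by `t` (with respect to `A` and `C`). -/
def StructSub (A : DTA F ar Q) (C : V → Q) (s t : Term F ar V) : Prop :=
  (∀ p f ts, t.sub p = some (Term.app f ts) →
    ∃ sp, s.sub p = some sp ∧ sp.rootSym = Sum.inl f) ∧
  (∀ p tp, t.sub p = some tp → ∃ sp, s.sub p = some sp ∧ A.runC C tp = A.runC C sp)

/-- Building a binary term `f(t,u)` from a symbol of arity 2. -/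
def mkBin {f : F} (h : ar f = 2) (t u : Term F ar V) : Term F ar V :=
  Term.app f (fun i => if (i : ℕ) = 0 then t else u)

/-- `s` satisfies the infinite-instances property in `⟨S,R⟩`. -/
def InfiniteInstances (R : RRC F ar V Q) (S : Set (Term F ar V)) (s : Term F ar V) :
    Prop :=
  ∃ x, s.occursTwice x ∧
    ∃ φ : ℕ → (V → GTerm F ar),
      (∀ i, R.IsSolution (φ i)) ∧
      (∀ i, s.subst (φ i) ∉ R.lang (S \ {s})) ∧
      (∀ i j, i ≠ j → φ i x ≠ φ j x)

/-- The set of prefixes of a finite set of positions. -/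
def prefixes (P : Finset (List ℕ)) : Finset (List ℕ) :=
  P.biUnion (fun p => p.inits.toFinset)


/-! ### Auxiliary development -/

open Classical in
lemma allSome_some {n : ℕ} {α : Type} (a : Fin n → α) :
    allSome (fun i => some (a i)) = some a := by
  simp [allSome]

lemma run_app (A : DTA F ar Q) (g : F) (us : Fin (ar g) → GTerm F ar) :
    A.run (.app g us) = (allSome fun j => A.run (us j)).bind (A.δ g) := rfl

open Classical in
/-- Number of occurrences of a variable in a term. -/
noncomputable def Term.vcount (x : V) : Term F ar V → ℕ
  | .var y => if y = x then 1 else 0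
  | .app _ ts => ∑ i, (ts i).vcount x

/-- Embedding ground terms into terms with variables. -/
def emb : GTerm F ar → Term F ar V :=
  Term.subst (fun e => e.elim)

lemma emb_app (f : F) (ts : Fin (ar f) → GTerm F ar) :
    (emb (Term.app f ts) : Term F ar V) = Term.app f (fun i => emb (ts i)) := rfl

lemma emb_subst (u : GTerm F ar) (φ : V → GTerm F ar) :
    (emb u).subst φ = u := by
  induction u with
  | var e => exact e.elim
  | app f ts ih =>
      rw [emb_app]
      show Term.app f (fun i => (emb (ts i)).subst φ) = _
      congr 1; funext i; exact ih i

lemma vcount_emb (u : GTerm F ar) (x : V) : (emb u : Term F ar V).vcount x = 0 := by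
  induction u with
  | var e => exact e.elim
  | app f ts ih =>
      rw [emb_app]
      show ∑ i, (emb (ts i) : Term F ar V).vcount x = 0
      exact Finset.sum_eq_zero fun i _ => ih i

lemma subst_subst (t : Term F ar V) (σ : V → Term F ar V) (φ : V → GTerm F ar) :
    (t.subst σ).subst φ = t.subst (fun y => (σ y).subst φ) := by
  induction t with
  | var y => rfl
  | app f ts ih =>
      show Term.app f _ = Term.app f _
      congr 1; funext i; exact ih i

lemma subst_congr (t : Term F ar V) (φ ψ : V → GTerm F ar)
    (h : ∀ x, 1 ≤ t.vcount x → φ x = ψ x) : t.subst φ = t.subst ψ := by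
  induction t with
  | var y =>
      show φ y = ψ y
      exact h y (by simp [Term.vcount])
  | app f ts ih =>
      show Term.app f _ = Term.app f _
      congr 1; funext i
      refine ih i fun x hx => h x ?_
      calc 1 ≤ (ts i).vcount x := hx
        _ ≤ ∑ j, (ts j).vcount x :=
          Finset.single_le_sum (f := fun j => (ts j).vcount x)
            (fun j _ => Nat.zero_le _) (Finset.mem_univ i)

lemma sub_cons (f : F) (ts : Fin (ar f) → Term F ar V) (i : Fin (ar f)) (p : List ℕ) :
    (Term.app f ts).sub (i.1 :: p) = (ts i).sub p := by
  show (if h : i.1 < ar f then (ts ⟨i.1, h⟩).sub p else none) = _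
  rw [dif_pos i.isLt]

lemma exists_pos_of_one_le_vcount :
    ∀ (t : Term F ar V) (x : V), 1 ≤ t.vcount x → ∃ p, t.sub p = some (Term.var x)
  | .var y, x, h => by
      by_cases hyx : y = x
      · subst hyx; exact ⟨[], rfl⟩
      · simp [Term.vcount, hyx] at h
  | .app f ts, x, h => by
      have : ∃ i, (ts i).vcount x ≠ 0 := by
        by_contra hc
        push_neg at hc
        simp only [Term.vcount] at h
        rw [Finset.sum_eq_zero (fun i _ => hc i)] at h
        omega
      obtain ⟨i, hi⟩ := this
      obtain ⟨p, hp⟩ := exists_pos_of_one_le_vcount (ts i) x (Nat.one_le_iff_ne_zero.2 hi)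
      exact ⟨i.1 :: p, by rw [sub_cons]; exact hp⟩

lemma occursTwice_of_two_le_vcount :
    ∀ (t : Term F ar V) (x : V), 2 ≤ t.vcount x → t.occursTwice x
  | .var y, x, h => by
      simp only [Term.vcount] at h
      split at h <;> omega
  | .app f ts, x, h => by
      simp only [Term.vcount] at h
      by_cases hone : ∃ i, 2 ≤ (ts i).vcount x
      · obtain ⟨i, hi⟩ := hone
        obtain ⟨p, q, hpq, hp, hq⟩ := occursTwice_of_two_le_vcount (ts i) x hi
        refine ⟨i.1 :: p, i.1 :: q, by simpa using hpq, ?_, ?_⟩ <;>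
          rw [sub_cons] <;> assumption
      · push_neg at hone
        have h1 : ∀ i, (ts i).vcount x ≤ 1 := fun i => by have := hone i; omega
        -- find two distinct indices with count ≥ 1
        set T := Finset.univ.filter (fun i => (ts i).vcount x ≠ 0) with hT
        have hsumT : ∑ i ∈ T, (ts i).vcount x = ∑ i, (ts i).vcount x :=
          Finset.sum_filter_ne_zero _
        have hcard : 2 ≤ T.card := by
          by_contra hc
          push_neg at hc
          have : ∑ i ∈ T, (ts i).vcount x ≤ T.card * 1 :=
            Finset.sum_le_card_nsmul T _ 1 (fun i _ => h1 i)
          omega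
        obtain ⟨i, hiT, j, hjT, hij⟩ := Finset.one_lt_card.mp hcard
        have hi : 1 ≤ (ts i).vcount x := by
          have := (Finset.mem_filter.mp hiT).2; omega
        have hj : 1 ≤ (ts j).vcount x := by
          have := (Finset.mem_filter.mp hjT).2; omega
        obtain ⟨p, hp⟩ := exists_pos_of_one_le_vcount (ts i) x hi
        obtain ⟨q, hq⟩ := exists_pos_of_one_le_vcount (ts j) x hj
        refine ⟨i.1 :: p, j.1 :: q, ?_, ?_, ?_⟩
        · simp only [ne_eq, List.cons.injEq, not_and]
          intro hval; exact absurd (Fin.val_injective hval) hij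
        · rw [sub_cons]; exact hp
        · rw [sub_cons]; exact hq

/-- Linear matching semantics: `u` matches the pattern `t`, where a variable
`x` matches exactly the terms on which `A` reaches `C x`. -/
def Matches (A : DTA F ar Q) (C : V → Q) : Term F ar V → GTerm F ar → Prop
  | .var x, u => A.run u = some (C x)
  | .app _ _, .var e => e.elim
  | .app f ts, .app g us =>
      ∃ h : f = g, ∀ i : Fin (ar f),
        Matches A C (ts i) (us (Fin.cast (congrArg ar h) i))

lemma matches_self (A : DTA F ar Q) (C : V → Q) :
    ∀ (t : Term F ar V) (φ : V → GTerm F ar),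
      (∀ x, A.run (φ x) = some (C x)) → Matches A C t (t.subst φ)
  | .var x, φ, h => h x
  | .app f ts, φ, h => by
      show ∃ hh : f = f, ∀ i : Fin (ar f), Matches A C (ts i) _
      exact ⟨rfl, fun i => matches_self A C (ts i) φ h⟩

lemma matches_subst (A : DTA F ar Q) (C : V → Q) :
    ∀ (t : Term F ar V) (u : GTerm F ar),
      (∀ x, t.vcount x ≤ 1) → Matches A C t u →
      ∃ φ : V → GTerm F ar,
        (∀ x, 1 ≤ t.vcount x → A.run (φ x) = some (C x)) ∧ u = t.subst φ
  | .var y, u, _, hm => by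
      refine ⟨fun _ => u, fun x hx => ?_, rfl⟩
      have hyx : y = x := by
        by_contra hc
        simp [Term.vcount, hc] at hx
      subst hyx
      exact hm
  | .app f ts, .var e, _, _ => e.elim
  | .app f ts, .app g us, hlin, hm => by
      obtain ⟨hfg, hmi⟩ := hm
      subst hfg
      have hmi' : ∀ i : Fin (ar f), Matches A C (ts i) (us i) := fun i => by
        have := hmi i
        simpa [Fin.cast] using this
      have hlin' : ∀ i x, (ts i).vcount x ≤ 1 := fun i x =>
        le_trans (Finset.single_le_sum (f := fun j => (ts j).vcount x)
          (fun j _ => Nat.zero_le _) (Finset.mem_univ i)) (hlin x)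
      have hch := fun i => matches_subst A C (ts i) (us i) (hlin' i) (hmi' i)
      choose φf h1 h2 using hch
      classical
      refine ⟨fun x => if hx : ∃ i, 1 ≤ (ts i).vcount x
        then φf hx.choose x else Term.app f us, fun x hx => ?_, ?_⟩
      · have hex : ∃ i, 1 ≤ (ts i).vcount x := by
          by_contra hc
          push_neg at hc
          have : ∀ i, (ts i).vcount x = 0 := fun i => by have := hc i; omega
          simp only [Term.vcount] at hx
          rw [Finset.sum_eq_zero (fun i _ => this i)] at hx
          omega
        dsimp only
        rw [dif_pos hex]
        exact h1 hex.choose x hex.choose_spec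
      · show Term.app f us = Term.app f _
        congr 1; funext i
        rw [h2 i]
        refine subst_congr _ _ _ fun x hx => ?_
        have hex : ∃ j, 1 ≤ (ts j).vcount x := ⟨i, hx⟩
        have hji : hex.choose = i := by
          by_contra hc
          have hjx := hex.choose_spec
          have : 2 ≤ ∑ j, (ts j).vcount x := by
            have hpair : (ts hex.choose).vcount x + (ts i).vcount x =
                ∑ j ∈ ({hex.choose, i} : Finset (Fin (ar f))), (ts j).vcount x :=
              (Finset.sum_pair (f := fun j => (ts j).vcount x) hc).symm
            have hsub : ∑ j ∈ ({hex.choose, i} : Finset (Fin (ar f))), (ts j).vcount x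
                ≤ ∑ j, (ts j).vcount x :=
              Finset.sum_le_sum_of_subset (Finset.subset_univ _)
            omega
          have := hlin x
          simp only [Term.vcount] at this
          omega
        rw [dif_pos hex, hji]

open Classical in
lemma vcount_subst_pat (D : V → Prop) (g : ∀ x, D x → GTerm F ar) :
    ∀ (t : Term F ar V) (x : V),
    (t.subst (fun y => if h : D y then emb (g y h) else .var y)).vcount x
      = if D x then 0 else t.vcount x
  | .var z, x => by
      by_cases hz : D z
      · rw [show (Term.var z).subst (fun y => if h : D y then emb (g y h) else .var y)
            = emb (g z hz) from by simp [Term.subst, hz]]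
        rw [vcount_emb]
        by_cases hx : D x
        · simp [hx]
        · simp [hx, Term.vcount, show z ≠ x from fun h => hx (h ▸ hz)]
      · rw [show (Term.var z).subst (fun y => if h : D y then emb (g y h) else .var y)
            = Term.var z from by simp [Term.subst, hz]]
        by_cases hx : D x
        · have hzx : z ≠ x := fun h => hz (h ▸ hx)
          simp [hx, Term.vcount, hzx]
        · simp [hx]
  | .app f ts, x => by
      show ∑ i, ((ts i).subst _).vcount x = _
      rw [Finset.sum_congr rfl (fun i _ => vcount_subst_pat D g (ts i) x)]
      by_cases hx : D x <;> simp [hx, Term.vcount]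

lemma isRegular_empty : IsRegular (∅ : Set (GTerm F ar)) :=
  ⟨PUnit, inferInstance, ⟨fun _ _ => none⟩, ∅, by simp⟩

lemma isRegular_union {L₁ L₂ : Set (GTerm F ar)} (h₁ : IsRegular L₁)
    (h₂ : IsRegular L₂) : IsRegular (L₁ ∪ L₂) := by
  obtain ⟨Q₁, i₁, A₁, F₁, hL₁⟩ := h₁
  obtain ⟨Q₂, i₂, A₂, F₂, hL₂⟩ := h₂
  letI := i₁; letI := i₂
  set P : DTA F ar (Option Q₁ × Option Q₂) :=
    ⟨fun g cs => some ((allSome fun j => (cs j).1).bind (A₁.δ g),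
                       (allSome fun j => (cs j).2).bind (A₂.δ g))⟩ with hP
  have hrun : ∀ u : GTerm F ar, P.run u = some (A₁.run u, A₂.run u) := by
    intro u
    induction u with
    | var e => exact e.elim
    | app g us ih =>
        rw [run_app]
        simp only [ih]
        rw [allSome_some]
        rfl
  refine ⟨Option Q₁ × Option Q₂, inferInstance, P,
    {st | (∃ q ∈ F₁, st.1 = some q) ∨ (∃ q ∈ F₂, st.2 = some q)}, ?_⟩
  ext t
  simp only [Set.mem_union, hL₁, hL₂, Set.mem_setOf_eq, hrun t, Option.some.injEq]
  constructor
  · rintro (⟨q, hq, hrq⟩ | ⟨q, hq, hrq⟩)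
    · exact ⟨(A₁.run t, A₂.run t), Or.inl ⟨q, hq, hrq.symm ▸ rfl⟩, rfl⟩
    · exact ⟨(A₁.run t, A₂.run t), Or.inr ⟨q, hq, hrq.symm ▸ rfl⟩, rfl⟩
  · rintro ⟨st, hst, hsteq⟩
    subst hsteq
    rcases hst with ⟨q, hq, hrq⟩ | ⟨q, hq, hrq⟩
    · exact Or.inl ⟨q, hq, hrq⟩
    · exact Or.inr ⟨q, hq, hrq⟩

lemma isRegular_biUnion {ι : Type} [DecidableEq ι] (T : Finset ι)
    (L : ι → Set (GTerm F ar)) (h : ∀ i, IsRegular (L i)) :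
    IsRegular (⋃ i ∈ T, L i) := by
  induction T using Finset.induction_on with
  | empty => simpa using isRegular_empty
  | insert _ _ hni ih =>
      rw [Finset.set_biUnion_insert]
      exact isRegular_union (h _) ih

lemma isRegular_iUnion {ι : Type} [Fintype ι] (L : ι → Set (GTerm F ar))
    (h : ∀ i, IsRegular (L i)) : IsRegular (⋃ i, L i) := by
  classical
  have : (⋃ i, L i) = ⋃ i ∈ (Finset.univ : Finset ι), L i := by simp
  rw [this]
  exact isRegular_biUnion _ L h

lemma height_le_finite [Fintype F] :
    ∀ n : ℕ, {t : GTerm F ar | t.height ≤ n}.Finite := by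
  intro n
  induction n with
  | zero =>
      refine Set.Finite.subset (Set.finite_range
        (fun p : (Σ f : F, Fin (ar f) → (∅ : Set (GTerm F ar))) =>
          (Term.app p.1 (fun i => (p.2 i).1) : GTerm F ar))) ?_
      rintro t ht
      cases t with
      | var e => exact e.elim
      | app f ts =>
          have hts : ∀ i : Fin (ar f), False := by
            intro i
            have : (ts i).height + 1 ≤ 0 := by
              refine le_trans ?_ ht
              exact Finset.le_sup (f := fun i => (ts i).height + 1) (Finset.mem_univ i)
            omega
          exact ⟨⟨f, fun i => (hts i).elim⟩, by
            show Term.app f _ = Term.app f ts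
            congr 1; funext i; exact (hts i).elim⟩
  | succ n ih =>
      letI := ih.fintype
      refine Set.Finite.subset (Set.finite_range
        (fun p : (Σ f : F, Fin (ar f) → {t : GTerm F ar | t.height ≤ n}) =>
          (Term.app p.1 (fun i => (p.2 i).1) : GTerm F ar))) ?_
      rintro t ht
      cases t with
      | var e => exact e.elim
      | app f ts =>
          have hts : ∀ i : Fin (ar f), (ts i).height ≤ n := by
            intro i
            have : (ts i).height + 1 ≤ n + 1 := by
              refine le_trans ?_ ht
              exact Finset.le_sup (f := fun i => (ts i).height + 1) (Finset.mem_univ i)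
            omega
          exact ⟨⟨f, fun i => ⟨ts i, hts i⟩⟩, rfl⟩

lemma matches_regular [Fintype Q] (A : DTA F ar Q) (C : V → Q) :
    ∀ t : Term F ar V, IsRegular {u : GTerm F ar | Matches A C t u}
  | .var x => ⟨Q, inferInstance, A, {C x}, by
      ext u
      simp only [Set.mem_setOf_eq, Set.mem_singleton_iff, exists_eq_left]
      exact Iff.rfl⟩
  | .app f ts => by
      have hch := fun i : Fin (ar f) => matches_regular A C (ts i)
      choose Qt ft At Ft hFt using hch
      letI := fun i => ft i
      set P : DTA F ar ((∀ i : Fin (ar f), Option (Qt i)) × Prop) :=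
        ⟨fun g cs => some
          (fun i => (allSome (fun j => (cs j).1 i)).bind ((At i).δ g),
           ∃ h : f = g, ∀ i : Fin (ar f),
             ∃ q ∈ Ft i, (cs (Fin.cast (congrArg ar h) i)).1 i = some q)⟩ with hP
      have hrun : ∀ u : GTerm F ar,
          P.run u = some (fun i => (At i).run u, Matches A C (.app f ts) u) := by
        intro u
        induction u with
        | var e => exact e.elim
        | app g us ih =>
            rw [run_app]
            simp only [ih]
            rw [allSome_some]
            show some _ = _
            rw [Option.some.injEq]
            refine Prod.ext ?_ ?_
            · funext i
              show (allSome fun j => (At i).run (us j)).bind ((At i).δ g)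
                  = (At i).run (Term.app g us)
              rw [run_app]
            · show (∃ h : f = g, ∀ i : Fin (ar f),
                  ∃ q ∈ Ft i, (At i).run (us (Fin.cast (congrArg ar h) i)) = some q)
                = Matches A C (.app f ts) (.app g us)
              refine propext ?_
              show _ ↔ ∃ h : f = g, ∀ i : Fin (ar f),
                  Matches A C (ts i) (us (Fin.cast (congrArg ar h) i))
              refine exists_congr fun h => forall_congr' fun i => ?_
              have := Set.ext_iff.mp (hFt i) (us (Fin.cast (congrArg ar h) i))
              simp only [Set.mem_setOf_eq] at this
              exact ⟨fun hq => this.2 hq, fun hm => this.1 hm⟩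
      refine ⟨_, inferInstance, P, {st | st.2}, ?_⟩
      ext u
      simp only [Set.mem_setOf_eq, hrun u, Option.some.injEq]
      constructor
      · intro hm
        exact ⟨(fun i => (At i).run u, Matches A C (.app f ts) u), hm, rfl⟩
      · rintro ⟨st, hst, hsteq⟩
        rw [← hsteq] at hst
        exact hst

open Classical in
lemma vcount_subst_split (Dp : V → Prop) (σ : V → Term F ar V)
    (h0 : ∀ y x, Dp y → (σ y).vcount x = 0)
    (h1 : ∀ y, ¬ Dp y → σ y = .var y) :
    ∀ (t : Term F ar V) (x : V),
      (t.subst σ).vcount x = if Dp x then 0 else t.vcount x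
  | .var z, x => by
      show (σ z).vcount x = _
      by_cases hz : Dp z
      · rw [h0 z x hz]
        by_cases hx : Dp x
        · simp [hx]
        · have : z ≠ x := fun h => hx (h ▸ hz)
          simp [hx, Term.vcount, this]
      · rw [h1 z hz]
        by_cases hx : Dp x
        · have : z ≠ x := fun h => hz (h ▸ hx)
          simp [hx, Term.vcount, this]
        · simp [hx]
  | .app f ts, x => by
      show ∑ i, ((ts i).subst σ).vcount x = _
      rw [Finset.sum_congr rfl (fun i _ => vcount_subst_split Dp σ h0 h1 (ts i) x)]
      by_cases hx : Dp x <;> simp [hx, Term.vcount]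

/-- The candidate set of ground terms for a variable. -/
def CandSet (R : RRC F ar V Q) (x : V) : Set (GTerm F ar) :=
  {u | R.A.run u = some (R.C x) ∧ (x ∈ R.W → u.height ≤ R.hgt)}

/-- A variable is "restricted" for `s` if it is height-restricted or occurs twice. -/
noncomputable def Dup (R : RRC F ar V Q) (s : Term F ar V) (x : V) : Prop :=
  x ∈ R.W ∨ 2 ≤ s.vcount x

open Classical in
/-- Substituting the restricted variables of `s` by chosen ground terms. -/
noncomputable def patSub (R : RRC F ar V Q) (s : Term F ar V)
    (c : ∀ _ : {x : V // Dup R s x}, GTerm F ar) : Term F ar V :=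
  s.subst (fun y => if hy : Dup R s y then emb (c ⟨y, hy⟩) else .var y)

/-- if every term of `S` is regular with respect to `R`
(each variable occurring at least twice in it has a finite language or is
height-restricted), then `L(⟨S,R⟩)` is regular. -/
theorem regular_of_all_terms_regular {F V Q : Type} {ar : F → ℕ}
    [Fintype F] [Fintype Q] [Fintype V]
    (R : RRC F ar V Q) (S : Finset (Term F ar V))
    (hreg : ∀ s ∈ S, ∀ x : V, Term.occursTwice s x →
      (R.A.lang (R.C x)).Finite ∨ x ∈ R.W) :
    IsRegular (R.lang ↑S) := by
  classical
  by_cases hsat : ∀ x, (CandSet R x).Nonempty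
  · -- every variable constraint is satisfiable
    have hfin : ∀ s ∈ S, ∀ x, Dup R s x → (CandSet R x).Finite := by
      intro s hs x hx
      rcases hx with hW | h2
      · exact (height_le_finite R.hgt).subset (fun u hu => hu.2 hW)
      · rcases hreg s hs x (occursTwice_of_two_le_vcount s x h2) with hf | hW
        · exact hf.subset (fun u hu => hu.1)
        · exact (height_le_finite R.hgt).subset (fun u hu => hu.2 hW)
    haveI : ∀ (s : {s : Term F ar V // s ∈ S}) (x : {x : V // Dup R s.1 x}),
        Fintype (CandSet R x.1) := fun s x => (hfin s.1 s.2 x.1 x.2).fintype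
    have key : R.lang ↑S =
        ⋃ p : Σ s : {s : Term F ar V // s ∈ S},
            ((x : {x : V // Dup R s.1 x}) → (CandSet R x.1)),
          {u | Matches R.A R.C (patSub R p.1.1 (fun x => (p.2 x : GTerm F ar))) u} := by
      ext t
      simp only [Set.mem_iUnion, Set.mem_setOf_eq]
      constructor
      · rintro ⟨s, hs, φ, ⟨hrun, hht⟩, rfl⟩
        refine ⟨⟨⟨s, hs⟩, fun x => ⟨φ x.1, hrun x.1, fun hw => hht x.1 hw⟩⟩, ?_⟩
        have hpe : (patSub R s (fun x : {x : V // Dup R s x} => φ x.1)).subst φ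
            = s.subst φ := by
          unfold patSub
          rw [subst_subst]
          refine subst_congr _ _ _ fun y _ => ?_
          by_cases hdy : Dup R s y
          · simp only [dif_pos hdy]
            exact emb_subst _ _
          · simp only [dif_neg hdy]
            rfl
        show Matches R.A R.C _ (s.subst φ)
        rw [← hpe]
        exact matches_self R.A R.C _ φ hrun
      · rintro ⟨⟨⟨s, hs⟩, c⟩, hm⟩
        have hcnt : ∀ x, (patSub R s (fun x => (c x : GTerm F ar))).vcount x
            = if Dup R s x then 0 else s.vcount x := by
          intro x
          unfold patSub
          refine vcount_subst_split (Dup R s) _ ?_ ?_ s x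
          · intro y x hy
            simp only [dif_pos hy]
            exact vcount_emb _ _
          · intro y hy
            simp only [dif_neg hy]
        have hlin : ∀ x, (patSub R s (fun x => (c x : GTerm F ar))).vcount x ≤ 1 := by
          intro x
          rw [hcnt x]
          by_cases hdx : Dup R s x
          · simp [hdx]
          · have h2 : ¬ 2 ≤ s.vcount x := fun h2 => hdx (Or.inr h2)
            simp only [if_neg hdx]
            omega
        obtain ⟨φ', hrun', heq'⟩ := matches_subst R.A R.C _ t hlin hm
        refine ⟨s, hs, fun x => if hx : Dup R s x then (c ⟨x, hx⟩ : GTerm F ar)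
          else if 1 ≤ s.vcount x then φ' x else (hsat x).some, ⟨?_, ?_⟩, ?_⟩
        · intro x
          by_cases hx : Dup R s x
          · simp only [dif_pos hx]
            exact (c ⟨x, hx⟩).2.1
          · simp only [dif_neg hx]
            by_cases h1 : 1 ≤ s.vcount x
            · rw [if_pos h1]
              refine hrun' x ?_
              rw [hcnt x, if_neg hx]
              exact h1
            · rw [if_neg h1]
              exact (hsat x).some_mem.1
        · intro x hw
          dsimp only
          rw [dif_pos (show Dup R s x from Or.inl hw)]
          exact (c ⟨x, Or.inl hw⟩).2.2 hw
        · rw [heq']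
          unfold patSub
          rw [subst_subst]
          refine subst_congr _ _ _ fun y hy => ?_
          by_cases hdy : Dup R s y
          · simp only [dif_pos hdy]
            exact emb_subst _ _
          · simp only [dif_neg hdy]
            show φ' y = _
            rw [if_pos hy]
    rw [key]
    exact isRegular_iUnion _ (fun p => matches_regular R.A R.C _)
  · -- some constraint is unsatisfiable: the language is empty
    obtain ⟨x0, hx0⟩ := not_forall.mp hsat
    have hempty : R.lang ↑S = ∅ := by
      ext t
      simp only [Set.mem_empty_iff_false, iff_false]
      rintro ⟨s, hs, φ, ⟨hrun, hht⟩, rfl⟩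
      exact hx0 ⟨φ x0, hrun x0, fun hw => hht x0 hw⟩
    rw [hempty]
    exact isRegular_empty


end RITRC
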